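/- Unconditional boundedness and non-negativity of the implicit scalar scheme: let ψ be a saturation with saturation level α. Suppose ρ^n, ρ^{n+1} satisfy the implicit scheme relations with no-flux boundary conditions. If 0 ≤ ρ_i^n ≤ α for all 1 ≤ i ≤ M, then 0 ≤ ρ_i^{n+1} ≤ α for all 1 ≤ i ≤ M, with no restriction on Δt. -/
import Mathlib


/-- A *saturation* with saturation level `α > 0`: a continuous non-increasing function
`ψ : [0,∞) → ℝ` with `ψ α = 0` and `(α − s)·ψ s > 0` for every `s ≥ 0`, `s ≠ α`. -/
def IsSaturation (ψ : ℝ → ℝ) (α : ℝ) : Prop :=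
  0 < α ∧ ContinuousOn ψ (Set.Ici 0) ∧
    (∀ s₁ s₂, 0 ≤ s₁ → s₁ ≤ s₂ → ψ s₂ ≤ ψ s₁) ∧
    ψ α = 0 ∧ ∀ s, 0 ≤ s → s ≠ α → 0 < (α - s) * ψ s

/-- Unconditional boundedness and non-negativity of the implicit scalar scheme with
no-flux boundary conditions: here `u i` denotes `u_{i+1/2}` and `F i` denotes `F_{i+1/2}`
(so `F 0 = F_{1/2}` and `F M = F_{M+1/2}`). -/
theorem implicit_scalar_bound_preservation
    (ψ : ℝ → ℝ) (α : ℝ) (hψ : IsSaturation ψ α)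
    (Δx Δt : ℝ) (hΔx : 0 < Δx) (hΔt : 0 < Δt)
    (M : ℕ) (hM : 1 ≤ M)
    (u ρn ρn1 F : ℕ → ℝ)
    (hF0 : F 0 = 0) (hFM : F M = 0)
    (hFdef : ∀ i, 1 ≤ i → i + 1 ≤ M →
      F i = ρn1 i * max (ψ (ρn1 (i + 1))) 0 * max (u i) 0 +
        ρn1 (i + 1) * max (ψ (ρn1 i)) 0 * min (u i) 0)
    (hscheme : ∀ i, 1 ≤ i → i ≤ M →
      ρn1 i = ρn i - Δt / Δx * (F i - F (i - 1)))
    (hρn : ∀ i, 1 ≤ i → i ≤ M → 0 ≤ ρn i ∧ ρn i ≤ α) :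
    ∀ i, 1 ≤ i → i ≤ M → 0 ≤ ρn1 i ∧ ρn1 i ≤ α := by
  classical
  obtain ⟨hα, -, -, hψα, hs⟩ := hψ
  have hlam0 : 0 < Δt / Δx := div_pos hΔt hΔx
  -- Upper bound, local argument
  have hub : ∀ i, 1 ≤ i → i ≤ M → ρn1 i ≤ α := by
    intro i h1 h2
    by_contra hgt
    push_neg at hgt
    have hρpos : 0 < ρn1 i := lt_trans hα hgt
    have hψneg : ψ (ρn1 i) < 0 := by
      have h := hs (ρn1 i) hρpos.le (by linarith)
      nlinarith
    have hmax0 : max (ψ (ρn1 i)) 0 = 0 := max_eq_right hψneg.le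
    have hFi : 0 ≤ F i := by
      rcases eq_or_lt_of_le h2 with h | h
      · rw [h, hFM]
      · rw [hFdef i h1 (by omega), hmax0]
        have t1 : 0 ≤ ρn1 i * max (ψ (ρn1 (i + 1))) 0 * max (u i) 0 :=
          mul_nonneg (mul_nonneg hρpos.le (le_max_right _ _)) (le_max_right _ _)
        nlinarith
    have hFim : F (i - 1) ≤ 0 := by
      rcases eq_or_lt_of_le h1 with h | h
      · rw [← h]; simp [hF0]
      · have hdef := hFdef (i - 1) (by omega) (by omega)
        have hi1 : i - 1 + 1 = i := by omega
        rw [hi1] at hdef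
        rw [hdef, hmax0]
        have t2 : ρn1 i * max (ψ (ρn1 (i - 1))) 0 * min (u (i - 1)) 0 ≤ 0 :=
          mul_nonpos_of_nonneg_of_nonpos
            (mul_nonneg hρpos.le (le_max_right _ _)) (min_le_right _ _)
        nlinarith
    have hsch := hscheme i h1 h2
    have hρnb := hρn i h1 h2
    nlinarith [mul_nonneg hlam0.le (by linarith : (0:ℝ) ≤ F i - F (i - 1))]
  -- Lower bound
  have hlb : ∀ i, 1 ≤ i → i ≤ M → 0 ≤ ρn1 i := by
    by_contra hneg
    push_neg at hneg
    obtain ⟨i₀, h1₀, h2₀, hρ₀⟩ := hneg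
    have hex : ∃ i, 1 ≤ i ∧ i ≤ M ∧ ρn1 i < 0 := ⟨i₀, h1₀, h2₀, hρ₀⟩
    set a := Nat.find hex with ha
    obtain ⟨ha1, haM, haneg⟩ := Nat.find_spec hex
    -- base flux nonnegativity
    have hFa : 0 ≤ F (a - 1) := by
      rcases eq_or_lt_of_le ha1 with h | h
      · have h0 : a - 1 = 0 := by omega
        rw [h0, hF0]
      · have hprev : 0 ≤ ρn1 (a - 1) := by
          by_contra hc
          push_neg at hc
          exact Nat.find_min hex (m := a - 1) (by omega) ⟨by omega, by omega, hc⟩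
        have hdef := hFdef (a - 1) (by omega) (by omega)
        have hi1 : a - 1 + 1 = a := by omega
        rw [hi1] at hdef
        rw [hdef]
        have t1 : 0 ≤ ρn1 (a - 1) * max (ψ (ρn1 a)) 0 * max (u (a - 1)) 0 :=
          mul_nonneg (mul_nonneg hprev (le_max_right _ _)) (le_max_right _ _)
        have t2 : 0 ≤ ρn1 a * max (ψ (ρn1 (a - 1))) 0 * min (u (a - 1)) 0 := by
          have : ρn1 a * max (ψ (ρn1 (a - 1))) 0 ≤ 0 :=
            mul_nonpos_of_nonpos_of_nonneg haneg.le (le_max_right _ _)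
          nlinarith [min_le_right (u (a - 1)) (0:ℝ)]
        linarith
    -- inductive propagation
    have key : ∀ k, a + k ≤ M → ρn1 (a + k) < 0 ∧ 0 ≤ F (a + k - 1) := by
      intro k
      induction k with
      | zero => intro _; simpa using ⟨haneg, hFa⟩
      | succ k ih =>
        intro hk
        obtain ⟨hρk, hFk⟩ := ih (by omega)
        set j := a + k with hj
        have hj1 : 1 ≤ j := by omega
        have hjM : j + 1 ≤ M := by omega
        have hsch := hscheme j hj1 (by omega)
        have hρnb := hρn j hj1 (by omega)
        have hFjpos : 0 < F j := by
          have : Δt / Δx * F j = ρn j - ρn1 j + Δt / Δx * F (j - 1) := by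
            rw [hsch]; ring
          nlinarith [mul_nonneg hlam0.le hFk]
        have hdef := hFdef j hj1 hjM
        have hnext : ρn1 (j + 1) < 0 := by
          by_contra hc
          push_neg at hc
          have t1 : ρn1 j * max (ψ (ρn1 (j + 1))) 0 * max (u j) 0 ≤ 0 :=
            mul_nonpos_of_nonpos_of_nonneg
              (mul_nonpos_of_nonpos_of_nonneg hρk.le (le_max_right _ _)) (le_max_right _ _)
          have t2 : ρn1 (j + 1) * max (ψ (ρn1 j)) 0 * min (u j) 0 ≤ 0 :=
            mul_nonpos_of_nonneg_of_nonpos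
              (mul_nonneg hc (le_max_right _ _)) (min_le_right _ _)
          rw [hdef] at hFjpos
          linarith
        have he1 : a + (k + 1) = j + 1 := by omega
        rw [he1]
        have he2 : j + 1 - 1 = j := by omega
        rw [he2]
        exact ⟨hnext, hFjpos.le⟩
    have hfin := key (M - a) (by omega)
    have heM : a + (M - a) = M := by omega
    rw [heM] at hfin
    obtain ⟨hρM, hFM1⟩ := hfin
    have hsch := hscheme M hM le_rfl
    have hρnb := hρn M hM le_rfl
    rw [hFM] at hsch
    nlinarith [mul_nonneg hlam0.le hFM1]
  exact fun i h1 h2 => ⟨hlb i h1 h2, hub i h1 h2⟩
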